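/- Rosenblum–Halmos lemma: Let T, X be bounded operators on a complex Hilbert space (or elements of a complex unital Banach algebra). If TX = XT and X = TZ - ZT for some bounded operator Z, then the spectrum of X is {0} (X is quasinilpotent). -/
import Mathlib

/-- Rosenblum–Halmos lemma: if `X` commutes with `T` and lies in the range of the
inner derivation `Z ↦ TZ - ZT`, then `X` is quasinilpotent: `σ(X) = {0}`. -/
theorem rosenblum_halmos
    {A : Type*} [NormedRing A] [NormedAlgebra ℂ A] [CompleteSpace A] [Nontrivial A]
    (T X Z : A) (hcomm : T * X = X * T) (hran : X = T * Z - Z * T) :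
    spectrum ℂ X = {0} := by
  classical
  set D : A → A := fun w => T * w - w * T with hD
  have hDadd : ∀ a b : A, D (a + b) = D a + D b := by
    intro a b; simp only [hD]; noncomm_ring
  have hDsmul : ∀ (n : ℕ) (a : A), D (n • a) = n • D a := by
    intro n a; simp only [hD, mul_smul_comm, smul_mul_assoc, smul_sub]
  have hLeib : ∀ a b : A, D (a * b) = D a * b + a * D b := by
    intro a b; simp only [hD]; noncomm_ring
  have hDX : D X = 0 := by simp only [hD]; rw [hcomm, sub_self]
  have hDZ : D Z = X := by simp only [hD]; rw [hran]
  have hD0 : D 0 = 0 := by simp [hD]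
  have hIter0 : ∀ n : ℕ, D^[n] 0 = 0 := fun n => Function.iterate_fixed hD0 n
  -- two-term Leibniz for iterates, using D Z = X, D X = 0
  have hB : ∀ (m : ℕ) (b : A),
      D^[m + 1] (Z * b) = Z * D^[m + 1] b + (m + 1) • (X * D^[m] b) := by
    intro m
    induction m with
    | zero =>
      intro b
      simp only [Nat.zero_add, Function.iterate_one, Function.iterate_zero, id_eq, one_smul]
      rw [hLeib, hDZ]; abel
    | succ m ih =>
      intro b
      have h1 : D^[m + 1 + 1] (Z * b) = D (D^[m + 1] (Z * b)) :=
        Function.iterate_succ_apply' D (m + 1) (Z * b)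
      rw [h1, ih b, hDadd, hDsmul, hLeib, hLeib, hDX, hDZ]
      have h2 : D (D^[m + 1] b) = D^[m + 1 + 1] b :=
        (Function.iterate_succ_apply' D (m + 1) b).symm
      have h3 : D (D^[m] b) = D^[m + 1] b :=
        (Function.iterate_succ_apply' D m b).symm
      rw [h2, h3]
      simp only [zero_mul, zero_add, add_smul, one_smul, smul_add]
      abel
  -- vanishing of higher iterates on Z^n
  have hQ : ∀ (n m : ℕ), D^[n + m + 1] (Z ^ n) = 0 := by
    intro n
    induction n with
    | zero =>
      intro m
      have h1 : D 1 = 0 := by simp [hD]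
      rw [pow_zero, Nat.zero_add, Function.iterate_succ_apply, h1, hIter0]
    | succ n ih =>
      intro m
      have harith : n + 1 + m + 1 = (n + m + 1) + 1 := by omega
      rw [pow_succ' Z n, harith, hB (n + m + 1) (Z ^ n)]
      have e1 : n + m + 1 + 1 = n + (m + 1) + 1 := by omega
      rw [e1, ih (m + 1), ih m]
      simp
  -- the key identity
  have hR : ∀ n : ℕ, D^[n] (Z ^ n) = (n.factorial : ℕ) • X ^ n := by
    intro n
    induction n with
    | zero => simp
    | succ n ih =>
      rw [pow_succ' Z n, hB n (Z ^ n)]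
      have e1 : n + 1 = n + 0 + 1 := by omega
      rw [show D^[n + 1] (Z ^ n) = 0 by rw [e1]; exact hQ n 0, ih]
      rw [mul_zero, zero_add, mul_smul_comm, smul_smul,
        show X * X ^ n = X ^ (n + 1) from (pow_succ' X n).symm, Nat.factorial_succ]
  -- norm estimates
  have hDnorm : ∀ w : A, ‖D w‖ ≤ 2 * ‖T‖ * ‖w‖ := by
    intro w
    calc ‖T * w - w * T‖ ≤ ‖T * w‖ + ‖w * T‖ := norm_sub_le _ _
      _ ≤ ‖T‖ * ‖w‖ + ‖w‖ * ‖T‖ := add_le_add (norm_mul_le _ _) (norm_mul_le _ _)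
      _ = 2 * ‖T‖ * ‖w‖ := by ring
  have hT0 : (0 : ℝ) ≤ 2 * ‖T‖ := by positivity
  have hIterNorm : ∀ (n : ℕ) (w : A), ‖D^[n] w‖ ≤ (2 * ‖T‖) ^ n * ‖w‖ := by
    intro n
    induction n with
    | zero => intro w; simp
    | succ n ih =>
      intro w
      rw [Function.iterate_succ_apply' D n w]
      calc ‖D (D^[n] w)‖ ≤ 2 * ‖T‖ * ‖D^[n] w‖ := hDnorm _
        _ ≤ 2 * ‖T‖ * ((2 * ‖T‖) ^ n * ‖w‖) := by
            exact mul_le_mul_of_nonneg_left (ih w) hT0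
        _ = (2 * ‖T‖) ^ (n + 1) * ‖w‖ := by ring
  set c : ℝ := 2 * ‖T‖ * ‖Z‖ with hc
  have hc0 : (0 : ℝ) ≤ c := by positivity
  have hXn : ∀ n : ℕ, 0 < n → (n.factorial : ℝ) * ‖X ^ n‖ ≤ c ^ n := by
    intro n hn
    have h1 : ‖(n.factorial : ℕ) • X ^ n‖ = (n.factorial : ℝ) * ‖X ^ n‖ := by
      rw [← Nat.cast_smul_eq_nsmul ℂ (n.factorial) (X ^ n), norm_smul]
      simp
    calc (n.factorial : ℝ) * ‖X ^ n‖ = ‖D^[n] (Z ^ n)‖ := by rw [hR n, h1]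
      _ ≤ (2 * ‖T‖) ^ n * ‖Z ^ n‖ := hIterNorm n _
      _ ≤ (2 * ‖T‖) ^ n * ‖Z‖ ^ n := by
          exact mul_le_mul_of_nonneg_left (norm_pow_le' Z hn) (pow_nonneg hT0 n)
      _ = c ^ n := by rw [hc]; ring
  -- spectrum is contained in {0}
  have hsub : spectrum ℂ X ⊆ {0} := by
    intro lam hlam
    by_contra hlam0
    have hlam0' : lam ≠ 0 := hlam0
    have hnl : (0 : ℝ) < ‖lam‖ := norm_pos_iff.mpr hlam0'
    have h1pos : (0 : ℝ) < ‖(1 : A)‖ := norm_pos_iff.mpr one_ne_zero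
    -- lam ^ n ∈ spectrum (X ^ n)
    have hpow : ∀ n : ℕ, 0 < n → lam ^ n ∈ spectrum ℂ (X ^ n) := by
      intro n hn
      rw [spectrum.map_pow_of_pos X hn]
      exact ⟨lam, hlam, rfl⟩
    have hbound : ∀ n : ℕ, 0 < n → ‖lam‖ ^ n * (n.factorial : ℝ) ≤ c ^ n * ‖(1 : A)‖ := by
      intro n hn
      have h2 : ‖lam ^ n‖ ≤ ‖X ^ n‖ * ‖(1 : A)‖ :=
        spectrum.norm_le_norm_mul_of_mem (hpow n hn)
      rw [norm_pow] at h2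
      have h3 : (n.factorial : ℝ) * (‖X ^ n‖ * ‖(1 : A)‖) ≤ c ^ n * ‖(1 : A)‖ := by
        have := mul_le_mul_of_nonneg_right (hXn n hn) h1pos.le
        linarith [this]
      calc ‖lam‖ ^ n * (n.factorial : ℝ) ≤ (‖X ^ n‖ * ‖(1 : A)‖) * (n.factorial : ℝ) := by
            have : (0 : ℝ) ≤ (n.factorial : ℝ) := Nat.cast_nonneg _
            exact mul_le_mul_of_nonneg_right h2 this
        _ = (n.factorial : ℝ) * (‖X ^ n‖ * ‖(1 : A)‖) := by ring
        _ ≤ c ^ n * ‖(1 : A)‖ := h3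
    -- but (c/‖lam‖)^n / n! → 0, contradiction
    have htend : Filter.Tendsto (fun n : ℕ => (c / ‖lam‖) ^ n / (n.factorial : ℝ))
        Filter.atTop (nhds 0) := FloorSemiring.tendsto_pow_div_factorial_atTop (c / ‖lam‖)
    have hev : ∀ᶠ n : ℕ in Filter.atTop, (c / ‖lam‖) ^ n / (n.factorial : ℝ) < ‖(1 : A)‖⁻¹ := by
      have := htend.eventually (eventually_lt_nhds (inv_pos.mpr h1pos) |>.mono fun x h => h)
      exact this
    obtain ⟨n, hn1, hn2⟩ := (hev.and (Filter.eventually_ge_atTop 1)).exists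
    have hnpos : 0 < n := hn2
    have hfac : (0 : ℝ) < (n.factorial : ℝ) := by exact_mod_cast Nat.factorial_pos n
    have key := hbound n hnpos
    have hfpos : (0 : ℝ) < (n.factorial : ℝ) := hfac
    have e : (c / ‖lam‖) ^ n = c ^ n / ‖lam‖ ^ n := div_pow c ‖lam‖ n
    have h5 : c ^ n / (‖lam‖ ^ n * (n.factorial : ℝ)) < ‖(1 : A)‖⁻¹ := by
      rw [e, div_div] at hn1; exact hn1
    have hden : (0 : ℝ) < ‖lam‖ ^ n * (n.factorial : ℝ) := by positivity
    have h6 : c ^ n < ‖(1 : A)‖⁻¹ * (‖lam‖ ^ n * (n.factorial : ℝ)) :=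
      (div_lt_iff₀ hden).mp h5
    have h7 : ‖(1 : A)‖⁻¹ * (‖lam‖ ^ n * (n.factorial : ℝ)) ≤ ‖(1 : A)‖⁻¹ * (c ^ n * ‖(1 : A)‖) :=
      mul_le_mul_of_nonneg_left key (by positivity)
    have h8 : ‖(1 : A)‖⁻¹ * (c ^ n * ‖(1 : A)‖) = c ^ n := by
      field_simp
    linarith
  -- spectrum is nonempty, hence equals {0}
  obtain ⟨mu, hmu⟩ := spectrum.nonempty X
  have hmu0 : mu = 0 := hsub hmu
  apply Set.eq_singleton_iff_unique_mem.mpr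
  exact ⟨hmu0 ▸ hmu, fun x hx => hsub hx⟩
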